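/- Let Ω be a bounded open set and suppose λ(α,Ω) → L as α → +∞ (the limit exists by monotonicity and boundedness). Then L = λ^T(Ω), the first twisted eigenvalue: lim_{α→+∞} λ(α,Ω) = inf{ ∫_Ω H(∇u)² / ∫_Ω u² : u ∈ H¹₀(Ω), u ≢ 0, ∫_Ω u = 0 }. -/

import Mathlib

open MeasureTheory Set

noncomputable def rayleighQ (n : ℕ) (H : EuclideanSpace ℝ (Fin n) → ℝ) (α : ℝ)
    (Ω : Set (EuclideanSpace ℝ (Fin n))) (u : EuclideanSpace ℝ (Fin n) → ℝ) : ℝ :=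
  ((∫ x in Ω, (H (gradient u x)) ^ 2) + α * (∫ x in Ω, u x) ^ 2) / ∫ x in Ω, (u x) ^ 2

def testFun (n : ℕ) (Ω : Set (EuclideanSpace ℝ (Fin n)))
    (u : EuclideanSpace ℝ (Fin n) → ℝ) : Prop :=
  ContDiff ℝ 1 u ∧ HasCompactSupport u ∧ tsupport u ⊆ Ω ∧ u ≠ 0

noncomputable def eigenInf (n : ℕ) (H : EuclideanSpace ℝ (Fin n) → ℝ) (α : ℝ)
    (Ω : Set (EuclideanSpace ℝ (Fin n))) : ℝ :=
  sInf {q : ℝ | ∃ u, testFun n Ω u ∧ q = rayleighQ n H α Ω u}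

/-- First twisted Dirichlet eigenvalue. -/
noncomputable def twistedInf (n : ℕ) (H : EuclideanSpace ℝ (Fin n) → ℝ)
    (Ω : Set (EuclideanSpace ℝ (Fin n))) : ℝ :=
  sInf {q : ℝ | ∃ u, testFun n Ω u ∧ (∫ x in Ω, u x) = 0 ∧
    q = (∫ x in Ω, (H (gradient u x)) ^ 2) / ∫ x in Ω, (u x) ^ 2}


lemma my_cs {X : Type*} [MeasurableSpace X] (μ : Measure X) (f g : X → ℝ)
    (hf2 : Integrable (fun x => f x ^ 2) μ) (hg2 : Integrable (fun x => g x ^ 2) μ)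
    (hfg : Integrable (fun x => f x * g x) μ) :
    (∫ x, f x * g x ∂μ) ^ 2 ≤ (∫ x, f x ^ 2 ∂μ) * (∫ x, g x ^ 2 ∂μ) := by
  set F := ∫ x, f x ^ 2 ∂μ with hF
  set G := ∫ x, g x ^ 2 ∂μ with hGdef
  set I := ∫ x, f x * g x ∂μ with hI
  have hFnn : 0 ≤ F := integral_nonneg fun x => sq_nonneg _
  have hGnn : 0 ≤ G := integral_nonneg fun x => sq_nonneg _
  have key : ∀ t : ℝ, 0 ≤ F - 2 * t * I + t ^ 2 * G := by
    intro t
    have e1 : (fun x => (f x - t * g x) ^ 2)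
        = fun x => f x ^ 2 + ((-(2 * t)) * (f x * g x) + t ^ 2 * g x ^ 2) := by
      funext x; ring
    have i2 : Integrable (fun x => (-(2 * t)) * (f x * g x) + t ^ 2 * g x ^ 2) μ :=
      (hfg.const_mul _).add (hg2.const_mul _)
    have h2 : 0 ≤ ∫ x, (f x - t * g x) ^ 2 ∂μ := integral_nonneg fun x => sq_nonneg _
    rw [e1, integral_add hf2 i2, integral_add (hfg.const_mul (-(2 * t))) (hg2.const_mul (t ^ 2)),
        integral_const_mul, integral_const_mul] at h2
    rw [← hF, ← hGdef, ← hI] at h2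
    linarith
  rcases eq_or_lt_of_le hGnn with hG | hG
  · have h1 : ∀ t : ℝ, 0 ≤ F - 2 * t * I := by intro t; have := key t; nlinarith
    rcases eq_or_ne I 0 with h | h
    · rw [h, ← hG]; simp
    · exfalso
      have h2 := h1 ((F + 1) / (2 * I))
      have h3 : 2 * ((F + 1) / (2 * I)) * I = F + 1 := by field_simp
      linarith
  · have h4 := key (I / G)
    have h5 : 2 * (I / G) * I = 2 * (I ^ 2 / G) := by field_simp
    have h6 : (I / G) ^ 2 * G = I ^ 2 / G := by field_simp
    have h7 : I ^ 2 / G ≤ F := by rw [h5, h6] at h4; linarith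
    have h8 := mul_le_mul_of_nonneg_right h7 (le_of_lt hG)
    rwa [div_mul_cancel₀ _ (ne_of_gt hG)] at h8

variable {n : ℕ} {H : EuclideanSpace ℝ (Fin n) → ℝ} {a b : ℝ}

lemma myH_zero (hhom : ∀ (t : ℝ) (ξ : EuclideanSpace ℝ (Fin n)), H (t • ξ) = |t| * H ξ) :
    H 0 = 0 := by simpa using hhom 0 0

lemma myH_nonneg (ha : 0 < a) (hlow : ∀ ξ : EuclideanSpace ℝ (Fin n), a * ‖ξ‖ ≤ H ξ)
    (ξ : EuclideanSpace ℝ (Fin n)) : 0 ≤ H ξ :=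
  le_trans (by positivity) (hlow ξ)

lemma myH_subadd (hconv : ConvexOn ℝ univ H)
    (hhom : ∀ (t : ℝ) (ξ : EuclideanSpace ℝ (Fin n)), H (t • ξ) = |t| * H ξ)
    (x y : EuclideanSpace ℝ (Fin n)) : H (x + y) ≤ H x + H y := by
  have h := hconv.2 (mem_univ x) (mem_univ y) (by norm_num : (0:ℝ) ≤ 1/2)
    (by norm_num : (0:ℝ) ≤ 1/2) (by norm_num)
  have e : (1/2 : ℝ) • x + (1/2 : ℝ) • y = (1/2 : ℝ) • (x + y) := by
    rw [smul_add]
  rw [e, hhom] at h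
  have : |(1/2 : ℝ)| = 1/2 := by norm_num
  rw [this, smul_eq_mul, smul_eq_mul] at h
  linarith

lemma myH_cont (ha : 0 < a) (hab : a ≤ b) (hconv : ConvexOn ℝ univ H)
    (hhom : ∀ (t : ℝ) (ξ : EuclideanSpace ℝ (Fin n)), H (t • ξ) = |t| * H ξ)
    (hup : ∀ ξ : EuclideanSpace ℝ (Fin n), H ξ ≤ b * ‖ξ‖) : Continuous H := by
  have hb : 0 < b := lt_of_lt_of_le ha hab
  have key : ∀ x y : EuclideanSpace ℝ (Fin n), H x - H y ≤ b * ‖x - y‖ := by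
    intro x y
    have h1 : H x ≤ H y + H (x - y) := by
      have := myH_subadd hconv hhom y (x - y)
      simpa using this
    have h2 := hup (x - y)
    linarith
  have : LipschitzWith b.toNNReal H := by
    apply LipschitzWith.of_dist_le_mul
    intro x y
    rw [Real.dist_eq, dist_eq_norm, Real.coe_toNNReal _ hb.le]
    rw [abs_sub_le_iff]
    constructor
    · exact key x y
    · have := key y x
      rwa [show y - x = -(x - y) by abel, norm_neg] at this
  exact this.continuous

lemma grad_cont {u : EuclideanSpace ℝ (Fin n) → ℝ} (hu : ContDiff ℝ 1 u) :
    Continuous (gradient u) := by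
  have h := hu.continuous_fderiv one_ne_zero
  exact (InnerProductSpace.toDual ℝ (EuclideanSpace ℝ (Fin n))).symm.continuous.comp h

lemma grad_support {u : EuclideanSpace ℝ (Fin n) → ℝ} :
    Function.support (gradient u) ⊆ tsupport u := by
  intro x hx
  apply support_fderiv_subset ℝ (f := u)
  intro h0
  apply hx
  show (InnerProductSpace.toDual ℝ (EuclideanSpace ℝ (Fin n))).symm (fderiv ℝ u x) = 0
  rw [show fderiv ℝ u x = 0 from h0]
  simp

lemma grad_sub_smul {u φ : EuclideanSpace ℝ (Fin n) → ℝ} (hu : ContDiff ℝ 1 u)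
    (hφ : ContDiff ℝ 1 φ) (c : ℝ) (x : EuclideanSpace ℝ (Fin n)) :
    gradient (fun y => u y - c * φ y) x = gradient u x - c • gradient φ x := by
  have hud : DifferentiableAt ℝ u x := hu.differentiable one_ne_zero x
  have hφd : DifferentiableAt ℝ φ x := hφ.differentiable one_ne_zero x
  show (InnerProductSpace.toDual ℝ (EuclideanSpace ℝ (Fin n))).symm
      (fderiv ℝ (fun y => u y - c * φ y) x) = _
  rw [fderiv_fun_sub hud (hφd.const_mul c), fderiv_const_mul hφd c, map_sub, _root_.map_smul]
  rfl

section TestLemmas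
variable {Ω : Set (EuclideanSpace ℝ (Fin n))} {u φ : EuclideanSpace ℝ (Fin n) → ℝ}

lemma myHCS {f : EuclideanSpace ℝ (Fin n) → ℝ} {K : Set (EuclideanSpace ℝ (Fin n))}
    (hK : IsCompact K) (hKc : IsClosed K) (h : Function.support f ⊆ K) :
    HasCompactSupport f :=
  hK.of_isClosed_subset (isClosed_tsupport f) (closure_minimal h hKc)

lemma gH_support (hhom : ∀ (t : ℝ) (ξ : EuclideanSpace ℝ (Fin n)), H (t • ξ) = |t| * H ξ) :
    Function.support (fun x => H (gradient u x)) ⊆ tsupport u := by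
  intro x hx
  by_contra hmem
  have h0 : gradient u x = 0 := by
    by_contra h1
    exact hmem (grad_support (Function.mem_support.mpr h1))
  apply hx
  show H (gradient u x) = 0
  rw [h0, myH_zero hhom]

lemma setInt_eq {f : EuclideanSpace ℝ (Fin n) → ℝ} (h : Function.support f ⊆ Ω) :
    ∫ x in Ω, f x = ∫ x, f x :=
  setIntegral_eq_integral_of_forall_compl_eq_zero fun x hx => by
    by_contra h0; exact hx (h (Function.mem_support.mpr h0))

lemma int_on {f : EuclideanSpace ℝ (Fin n) → ℝ} (hf : Continuous f)
    (hc : HasCompactSupport f) : IntegrableOn f Ω volume :=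
  (hf.integrable_of_hasCompactSupport hc).integrableOn

-- facts about a test function
lemma test_gH_cont' (hH : Continuous H) (hu : ContDiff ℝ 1 u) :
    Continuous fun x => H (gradient u x) := hH.comp (grad_cont hu)

lemma test_gH_cont (hH : Continuous H) (hu : testFun n Ω u) :
    Continuous fun x => H (gradient u x) := hH.comp (grad_cont hu.1)

lemma test_gH_hcs' (hhom : ∀ (t : ℝ) (ξ : EuclideanSpace ℝ (Fin n)), H (t • ξ) = |t| * H ξ)
    (hcu : HasCompactSupport u) : HasCompactSupport fun x => H (gradient u x) :=
  myHCS hcu (isClosed_tsupport u) (gH_support hhom)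

lemma test_gH_hcs (hhom : ∀ (t : ℝ) (ξ : EuclideanSpace ℝ (Fin n)), H (t • ξ) = |t| * H ξ)
    (hu : testFun n Ω u) : HasCompactSupport fun x => H (gradient u x) :=
  myHCS hu.2.1 (isClosed_tsupport u) (gH_support hhom)

lemma test_int_u (hu : testFun n Ω u) : IntegrableOn u Ω volume :=
  int_on hu.1.continuous hu.2.1

lemma test_int_mul (hu : testFun n Ω u) (hφ : testFun n Ω φ) :
    IntegrableOn (fun x => u x * φ x) Ω volume :=
  int_on (hu.1.continuous.mul hφ.1.continuous)
    (myHCS hu.2.1 (isClosed_tsupport u) ((Function.support_mul_subset_left _ _).trans (subset_tsupport u)))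

lemma test_int_sq (hu : testFun n Ω u) : IntegrableOn (fun x => u x ^ 2) Ω volume := by
  have := test_int_mul hu hu
  simpa [pow_two] using this

lemma test_int_gH_mul' (hH : Continuous H)
    (hhom : ∀ (t : ℝ) (ξ : EuclideanSpace ℝ (Fin n)), H (t • ξ) = |t| * H ξ)
    (hu : ContDiff ℝ 1 u) (hcu : HasCompactSupport u) (hφ : ContDiff ℝ 1 φ) :
    IntegrableOn (fun x => H (gradient u x) * H (gradient φ x)) Ω volume :=
  int_on ((test_gH_cont' hH hu).mul (test_gH_cont' hH hφ))
    (myHCS (test_gH_hcs' hhom hcu) (isClosed_tsupport _)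
      ((Function.support_mul_subset_left _ _).trans (subset_tsupport _)))

lemma test_int_gH_mul (hH : Continuous H)
    (hhom : ∀ (t : ℝ) (ξ : EuclideanSpace ℝ (Fin n)), H (t • ξ) = |t| * H ξ)
    (hu : testFun n Ω u) (hφ : testFun n Ω φ) :
    IntegrableOn (fun x => H (gradient u x) * H (gradient φ x)) Ω volume :=
  test_int_gH_mul' hH hhom hu.1 hu.2.1 hφ.1

lemma test_int_gH_sq' (hH : Continuous H)
    (hhom : ∀ (t : ℝ) (ξ : EuclideanSpace ℝ (Fin n)), H (t • ξ) = |t| * H ξ)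
    (hu : ContDiff ℝ 1 u) (hcu : HasCompactSupport u) :
    IntegrableOn (fun x => H (gradient u x) ^ 2) Ω volume := by
  have := test_int_gH_mul' (Ω := Ω) hH hhom hu hcu hu
  simpa [pow_two] using this

lemma test_int_gH_sq (hH : Continuous H)
    (hhom : ∀ (t : ℝ) (ξ : EuclideanSpace ℝ (Fin n)), H (t • ξ) = |t| * H ξ)
    (hu : testFun n Ω u) :
    IntegrableOn (fun x => H (gradient u x) ^ 2) Ω volume := by
  have := test_int_gH_mul hH hhom hu hu
  simpa [pow_two] using this

lemma test_denom_pos (hΩo : IsOpen Ω) (hu : testFun n Ω u) : 0 < ∫ x in Ω, u x ^ 2 := by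
  have hsupp : Function.support (fun x => u x ^ 2) ⊆ Ω := by
    rw [Function.support_pow _ (two_ne_zero)]
    exact (subset_tsupport u).trans hu.2.2.1
  rw [setInt_eq hsupp]
  rw [integral_pos_iff_support_of_nonneg_ae
    (Filter.Eventually.of_forall fun x => sq_nonneg _)
    (((hu.1.continuous.pow 2).integrable_of_hasCompactSupport
      (myHCS hu.2.1 (isClosed_tsupport u)
        (by intro x hx; exact subset_tsupport u (by simpa using hx)))))]
  rw [Function.support_pow _ two_ne_zero]
  have hopen : IsOpen (Function.support u) := hu.1.continuous.isOpen_support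
  have hne : (Function.support u).Nonempty := Function.support_nonempty_iff.mpr hu.2.2.2
  exact hopen.measure_pos volume hne

end TestLemmas

section Bumps
variable {Ω : Set (EuclideanSpace ℝ (Fin n))} {u : EuclideanSpace ℝ (Fin n) → ℝ}

lemma test_const_mul (hu : testFun n Ω u) {c : ℝ} (hc : c ≠ 0) :
    testFun n Ω (fun x => c * u x) := by
  have hsupp : Function.support (fun x => c * u x) ⊆ tsupport u := fun x hx => by
    apply subset_tsupport u
    have : c * u x ≠ 0 := hx
    exact Function.mem_support.mpr fun h0 => this (by rw [h0, mul_zero])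
  refine ⟨contDiff_const.mul hu.1, myHCS hu.2.1 (isClosed_tsupport u) hsupp, ?_, ?_⟩
  · exact (closure_minimal hsupp (isClosed_tsupport u)).trans hu.2.2.1
  · obtain ⟨x, hx⟩ := Function.ne_iff.mp hu.2.2.2
    exact Function.ne_iff.mpr ⟨x, by simpa using mul_ne_zero hc (by simpa using hx)⟩

lemma exists_test_pos (hΩo : IsOpen Ω) (hΩne : Ω.Nonempty) :
    ∃ φ, testFun n Ω φ ∧ 0 < ∫ x in Ω, φ x := by
  obtain ⟨x₀, hx₀⟩ := hΩne
  obtain ⟨ε, hε, hball⟩ := Metric.isOpen_iff.mp hΩo x₀ hx₀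
  set f : ContDiffBump x₀ := ⟨ε/2, 3*ε/4, by positivity, by linarith⟩ with hf
  have hts : tsupport ⇑f ⊆ Ω := by
    rw [f.tsupport_eq]
    exact (Metric.closedBall_subset_ball (by show 3*ε/4 < ε; linarith)).trans hball
  have htest : testFun n Ω ⇑f := by
    refine ⟨f.contDiff, f.hasCompactSupport, hts, ?_⟩
    exact Function.ne_iff.mpr ⟨x₀, by
      rw [f.one_of_mem_closedBall (Metric.mem_closedBall_self (by positivity))]
      simp⟩
  refine ⟨⇑f, htest, ?_⟩
  rw [setInt_eq ((subset_tsupport _).trans hts)]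
  exact f.integral_pos

lemma exists_test_mean_zero (hn : 0 < n) (hΩo : IsOpen Ω) (hΩne : Ω.Nonempty) :
    ∃ w, testFun n Ω w ∧ ∫ x in Ω, w x = 0 := by
  obtain ⟨x₀, hx₀⟩ := hΩne
  obtain ⟨ε, hε, hball⟩ := Metric.isOpen_iff.mp hΩo x₀ hx₀
  set e : EuclideanSpace ℝ (Fin n) := EuclideanSpace.single (⟨0, hn⟩ : Fin n) (1:ℝ) with he
  have hne : ‖e‖ = 1 := by rw [he, EuclideanSpace.norm_single]; norm_num
  set δ := ε/4 with hδ
  have hδpos : 0 < δ := by positivity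
  set x₁ := x₀ + δ • e with hx₁
  set x₂ := x₀ - δ • e with hx₂
  set v := x₁ - x₂ with hv
  have hvnorm : ‖v‖ = 2*δ := by
    rw [hv, hx₁, hx₂, show x₀ + δ • e - (x₀ - δ • e) = (2*δ) • e by
      rw [two_mul, add_smul]; abel]
    rw [norm_smul, hne]
    simp [abs_of_pos hδpos]
  set f : ContDiffBump x₁ := ⟨δ/2, δ, by positivity, by linarith⟩ with hf
  set g : EuclideanSpace ℝ (Fin n) → ℝ := fun x => f (x + v) with hg
  set w : EuclideanSpace ℝ (Fin n) → ℝ := fun x => f x - g x with hw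
  have hsubΩ : Metric.closedBall x₁ δ ∪ Metric.closedBall x₂ δ ⊆ Ω := by
    intro y hy
    apply hball
    rcases hy with hy | hy <;> rw [Metric.mem_closedBall] at hy <;> rw [Metric.mem_ball]
    · calc dist y x₀ ≤ dist y x₁ + dist x₁ x₀ := dist_triangle _ _ _
        _ ≤ δ + δ := by
          refine add_le_add hy ?_
          rw [hx₁, dist_eq_norm, add_sub_cancel_left, norm_smul, hne]
          simp [abs_of_pos hδpos]
        _ < ε := by rw [hδ]; linarith
    · calc dist y x₀ ≤ dist y x₂ + dist x₂ x₀ := dist_triangle _ _ _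
        _ ≤ δ + δ := by
          refine add_le_add hy ?_
          rw [hx₂, dist_eq_norm, sub_sub_cancel_left, norm_neg, norm_smul, hne]
          simp [abs_of_pos hδpos]
        _ < ε := by rw [hδ]; linarith
  have hgsupp : Function.support g ⊆ Metric.closedBall x₂ δ := by
    intro x hx
    have : x + v ∈ Function.support ⇑f := Function.mem_support.mpr hx
    rw [f.support_eq] at this
    rw [Metric.mem_ball] at this
    rw [Metric.mem_closedBall, dist_eq_norm]
    have : ‖x + v - x₁‖ < δ := by rwa [dist_eq_norm] at this
    have hxv : x - x₂ = x + v - x₁ := by rw [hv]; abel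
    rw [hxv]
    exact this.le
  have hwsupp : Function.support w ⊆ Metric.closedBall x₁ δ ∪ Metric.closedBall x₂ δ := by
    intro x hx
    have : f x ≠ 0 ∨ g x ≠ 0 := by
      by_contra hcon
      push_neg at hcon
      exact hx (by show f x - g x = 0; rw [hcon.1, hcon.2, sub_zero])
    rcases this with h | h
    · left
      have := (subset_tsupport ⇑f) (Function.mem_support.mpr h)
      rwa [f.tsupport_eq] at this
    · exact Or.inr (hgsupp (Function.mem_support.mpr h))
  have hKcompact : IsCompact (Metric.closedBall x₁ δ ∪ Metric.closedBall x₂ δ) :=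
    (isCompact_closedBall _ _).union (isCompact_closedBall _ _)
  have hKclosed : IsClosed (Metric.closedBall x₁ δ ∪ Metric.closedBall x₂ δ) :=
    Metric.isClosed_closedBall.union Metric.isClosed_closedBall
  have hgc : Continuous g := f.continuous.comp (continuous_id.add continuous_const)
  have hwc : Continuous w := f.continuous.sub hgc
  have htest : testFun n Ω w := by
    refine ⟨?_, myHCS hKcompact hKclosed hwsupp, ?_, ?_⟩
    · exact (f.contDiff).sub
        ((f.contDiff).comp (contDiff_id.add contDiff_const))
    · exact (closure_minimal hwsupp hKclosed).trans hsubΩ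
    · refine Function.ne_iff.mpr ⟨x₁, ?_⟩
      have h1 : f x₁ = 1 := f.one_of_mem_closedBall (Metric.mem_closedBall_self (by positivity))
      have h2 : g x₁ = 0 := by
        apply f.zero_of_le_dist
        rw [dist_eq_norm, add_sub_cancel_left, hvnorm]
        linarith
      show w x₁ ≠ 0
      rw [hw]; show f x₁ - g x₁ ≠ 0; rw [h1, h2]; norm_num
  refine ⟨w, htest, ?_⟩
  rw [setInt_eq (hwsupp.trans hsubΩ)]
  have hif : Integrable ⇑f volume := f.integrable
  have hig : Integrable g volume := by
    have := hif.comp_add_right v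
    exact this
  rw [show (∫ x, w x) = ∫ x, f x - g x from rfl, integral_sub hif hig]
  have : ∫ x, g x = ∫ x, f x := by
    rw [hg]
    exact integral_add_right_eq_self (⇑f) v
  rw [this, sub_self]

end Bumps

section Eigen
variable {Ω : Set (EuclideanSpace ℝ (Fin n))} {u : EuclideanSpace ℝ (Fin n) → ℝ}

lemma meas_pos (hΩo : IsOpen Ω) (hΩb : Bornology.IsBounded Ω) (hΩne : Ω.Nonempty) :
    0 < (volume Ω).toReal :=
  ENNReal.toReal_pos (hΩo.measure_pos volume hΩne).ne' hΩb.measure_lt_top.ne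

lemma M_sq_le (hΩb : Bornology.IsBounded Ω) (hu : testFun n Ω u) :
    (∫ x in Ω, u x) ^ 2 ≤ (volume Ω).toReal * ∫ x in Ω, u x ^ 2 := by
  have h1 : IntegrableOn (fun _ : EuclideanSpace ℝ (Fin n) => (1:ℝ)) Ω volume := by
    exact integrableOn_const hΩb.measure_lt_top.ne
  have hcs := my_cs (volume.restrict Ω) u (fun _ => 1) (test_int_sq hu)
    (by simp only [one_pow]; exact h1) (by simp only [mul_one]; exact test_int_u hu)
  simp only [mul_one, one_pow] at hcs
  have : ∫ x in Ω, (1:ℝ) = (volume Ω).toReal := by simp [Measure.real]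
  rw [this] at hcs
  linarith [hcs]

lemma rayleigh_lb (hΩo : IsOpen Ω) (hΩb : Bornology.IsBounded Ω)
    (α : ℝ) (hu : testFun n Ω u) :
    -|α| * (volume Ω).toReal ≤ rayleighQ n H α Ω u := by
  have hD : 0 < ∫ x in Ω, u x ^ 2 := test_denom_pos hΩo hu
  have hN : 0 ≤ ∫ x in Ω, H (gradient u x) ^ 2 := integral_nonneg fun x => sq_nonneg _
  have hM := M_sq_le hΩb hu
  rw [rayleighQ, le_div_iff₀ hD]
  nlinarith [neg_abs_le α, le_abs_self α, sq_nonneg (∫ x in Ω, u x), abs_nonneg α,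
    ENNReal.toReal_nonneg (a := volume Ω)]

lemma eigen_set_nonempty (hΩo : IsOpen Ω) (hΩne : Ω.Nonempty) (α : ℝ) :
    {q : ℝ | ∃ u, testFun n Ω u ∧ q = rayleighQ n H α Ω u}.Nonempty := by
  obtain ⟨φ, hφ, -⟩ := exists_test_pos hΩo hΩne
  exact ⟨rayleighQ n H α Ω φ, φ, hφ, rfl⟩

lemma eigen_bddBelow (hΩo : IsOpen Ω) (hΩb : Bornology.IsBounded Ω) (α : ℝ) :
    BddBelow {q : ℝ | ∃ u, testFun n Ω u ∧ q = rayleighQ n H (α:ℝ) Ω u} :=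
  ⟨-|α| * (volume Ω).toReal, fun q hq => by
    obtain ⟨u, hu, rfl⟩ := hq; exact rayleigh_lb hΩo hΩb α hu⟩

lemma eigen_le (hΩo : IsOpen Ω) (hΩb : Bornology.IsBounded Ω) (α : ℝ) (hu : testFun n Ω u) :
    eigenInf n H α Ω ≤ rayleighQ n H α Ω u :=
  csInf_le (eigen_bddBelow hΩo hΩb α) ⟨u, hu, rfl⟩

lemma eigen_mono (hΩo : IsOpen Ω) (hΩb : Bornology.IsBounded Ω) (hΩne : Ω.Nonempty) :
    Monotone (fun α => eigenInf n H α Ω) := by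
  intro α β hab
  apply le_csInf (eigen_set_nonempty hΩo hΩne β)
  rintro q ⟨u, hu, rfl⟩
  refine le_trans (eigen_le hΩo hΩb α hu) ?_
  rw [rayleighQ, rayleighQ, div_le_div_iff_of_pos_right (test_denom_pos hΩo hu)]
  nlinarith [sq_nonneg (∫ x in Ω, u x)]

end Eigen

section Expand
variable {Ω : Set (EuclideanSpace ℝ (Fin n))} {u φ : EuclideanSpace ℝ (Fin n) → ℝ}

lemma expand_lin (hu : ContDiff ℝ 1 u) (hcu : HasCompactSupport u)
    (hφ : ContDiff ℝ 1 φ) (hcφ : HasCompactSupport φ) (c : ℝ) :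
    ∫ x in Ω, (u x - c * φ x) = (∫ x in Ω, u x) - c * ∫ x in Ω, φ x := by
  have h1 : IntegrableOn u Ω volume := int_on hu.continuous hcu
  have h2 : Integrable (fun x => c * φ x) (volume.restrict Ω) :=
    (int_on hφ.continuous hcφ : IntegrableOn φ Ω volume).const_mul c
  rw [integral_sub h1 h2, integral_const_mul]

lemma expand_sq (hu : ContDiff ℝ 1 u) (hcu : HasCompactSupport u)
    (hφ : ContDiff ℝ 1 φ) (hcφ : HasCompactSupport φ) (c : ℝ) :
    ∫ x in Ω, (u x - c * φ x) ^ 2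
      = (∫ x in Ω, u x ^ 2) - 2 * c * (∫ x in Ω, u x * φ x) + c ^ 2 * ∫ x in Ω, φ x ^ 2 := by
  have hu2 : Integrable (fun x => u x ^ 2) (volume.restrict Ω) := by
    have : IntegrableOn (fun x => u x * u x) Ω volume :=
      int_on (hu.continuous.mul hu.continuous)
        (myHCS hcu (isClosed_tsupport u)
          ((Function.support_mul_subset_left _ _).trans (subset_tsupport u)))
    simpa [pow_two, IntegrableOn] using this
  have hφ2 : Integrable (fun x => φ x ^ 2) (volume.restrict Ω) := by
    have : IntegrableOn (fun x => φ x * φ x) Ω volume :=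
      int_on (hφ.continuous.mul hφ.continuous)
        (myHCS hcφ (isClosed_tsupport φ)
          ((Function.support_mul_subset_left _ _).trans (subset_tsupport φ)))
    simpa [pow_two, IntegrableOn] using this
  have huφ : Integrable (fun x => u x * φ x) (volume.restrict Ω) :=
    int_on (hu.continuous.mul hφ.continuous)
      (myHCS hcu (isClosed_tsupport u)
        ((Function.support_mul_subset_left _ _).trans (subset_tsupport u)))
  have e1 : (fun x => (u x - c * φ x) ^ 2)
      = fun x => u x ^ 2 + ((-(2 * c)) * (u x * φ x) + c ^ 2 * φ x ^ 2) := by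
    funext x; ring
  have i2 : Integrable (fun x => (-(2 * c)) * (u x * φ x) + c ^ 2 * φ x ^ 2)
      (volume.restrict Ω) := (huφ.const_mul _).add (hφ2.const_mul _)
  rw [show (∫ x in Ω, (u x - c * φ x) ^ 2) = ∫ x in Ω,
      (u x ^ 2 + ((-(2 * c)) * (u x * φ x) + c ^ 2 * φ x ^ 2)) from by rw [← e1],
    integral_add hu2 i2, integral_add (huφ.const_mul _) (hφ2.const_mul _),
    integral_const_mul, integral_const_mul]
  ring

lemma Nv_le (hH : Continuous H)
    (hconv : ConvexOn ℝ univ H)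
    (hhom : ∀ (t : ℝ) (ξ : EuclideanSpace ℝ (Fin n)), H (t • ξ) = |t| * H ξ)
    (ha : 0 < a) (hlow : ∀ ξ : EuclideanSpace ℝ (Fin n), a * ‖ξ‖ ≤ H ξ)
    (hu : ContDiff ℝ 1 u) (hcu : HasCompactSupport u)
    (hφ : ContDiff ℝ 1 φ) (hcφ : HasCompactSupport φ) (c : ℝ) :
    ∫ x in Ω, H (gradient (fun y => u y - c * φ y) x) ^ 2
      ≤ (∫ x in Ω, H (gradient u x) ^ 2)
        + 2 * |c| * (∫ x in Ω, H (gradient u x) * H (gradient φ x))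
        + c ^ 2 * ∫ x in Ω, H (gradient φ x) ^ 2 := by
  have hv : ContDiff ℝ 1 (fun y => u y - c * φ y) := hu.sub (contDiff_const.mul hφ)
  have hcv : HasCompactSupport (fun y => u y - c * φ y) := by
    apply myHCS (hcu.union hcφ) ((isClosed_tsupport u).union (isClosed_tsupport φ))
    intro x hx
    by_contra hmem
    rw [mem_union] at hmem
    have h1 : u x = 0 := image_eq_zero_of_notMem_tsupport (fun h => hmem (Or.inl h))
    have h2 : φ x = 0 := image_eq_zero_of_notMem_tsupport (fun h => hmem (Or.inr h))
    exact hx (by show u x - c * φ x = 0; rw [h1, h2, mul_zero, sub_zero])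
  have hpt : ∀ x, H (gradient (fun y => u y - c * φ y) x) ^ 2
      ≤ H (gradient u x) ^ 2 + ((2 * |c|) * (H (gradient u x) * H (gradient φ x))
        + c ^ 2 * H (gradient φ x) ^ 2) := by
    intro x
    have hgv : gradient (fun y => u y - c * φ y) x = gradient u x - c • gradient φ x :=
      grad_sub_smul hu hφ c x
    have hb : H (gradient (fun y => u y - c * φ y) x)
        ≤ H (gradient u x) + |c| * H (gradient φ x) := by
      rw [hgv, sub_eq_add_neg, show -(c • gradient φ x) = (-c) • gradient φ x by
        rw [neg_smul]]
      refine le_trans (myH_subadd hconv hhom _ _) ?_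
      rw [hhom, abs_neg]
    have h0 : 0 ≤ H (gradient (fun y => u y - c * φ y) x) := myH_nonneg ha hlow _
    have h1 : 0 ≤ H (gradient u x) := myH_nonneg ha hlow _
    have h2 : 0 ≤ H (gradient φ x) := myH_nonneg ha hlow _
    nlinarith [sq_abs c, abs_nonneg c]
  have hIL : Integrable (fun x => H (gradient (fun y => u y - c * φ y) x) ^ 2)
      (volume.restrict Ω) := test_int_gH_sq' hH hhom hv hcv
  have hIu : Integrable (fun x => H (gradient u x) ^ 2) (volume.restrict Ω) :=
    test_int_gH_sq' hH hhom hu hcu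
  have hIφ : Integrable (fun x => H (gradient φ x) ^ 2) (volume.restrict Ω) :=
    test_int_gH_sq' hH hhom hφ hcφ
  have hIuφ : Integrable (fun x => H (gradient u x) * H (gradient φ x))
      (volume.restrict Ω) := test_int_gH_mul' hH hhom hu hcu hφ
  have hIR : Integrable (fun x => H (gradient u x) ^ 2
      + ((2 * |c|) * (H (gradient u x) * H (gradient φ x))
        + c ^ 2 * H (gradient φ x) ^ 2)) (volume.restrict Ω) :=
    hIu.add ((hIuφ.const_mul _).add (hIφ.const_mul _))
  have i3 : Integrable (fun x => (2 * |c|) * (H (gradient u x) * H (gradient φ x))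
      + c ^ 2 * H (gradient φ x) ^ 2) (volume.restrict Ω) :=
    (hIuφ.const_mul _).add (hIφ.const_mul _)
  have hmono := integral_mono hIL hIR hpt
  rwa [integral_add hIu i3, integral_add (hIuφ.const_mul (2 * |c|)) (hIφ.const_mul (c ^ 2)),
    integral_const_mul, integral_const_mul, ← add_assoc] at hmono

end Expand

section Sub
variable {Ω : Set (EuclideanSpace ℝ (Fin n))} {u φ : EuclideanSpace ℝ (Fin n) → ℝ}

lemma test_sub (hu : testFun n Ω u) (hφ : testFun n Ω φ) (c : ℝ)
    (hne : (fun x => u x - c * φ x) ≠ 0) : testFun n Ω (fun x => u x - c * φ x) := by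
  have hsupp : Function.support (fun x => u x - c * φ x) ⊆ tsupport u ∪ tsupport φ := by
    intro x hx
    by_contra hmem
    rw [mem_union] at hmem
    push_neg at hmem
    have h1 : u x = 0 := image_eq_zero_of_notMem_tsupport hmem.1
    have h2 : φ x = 0 := image_eq_zero_of_notMem_tsupport hmem.2
    exact hx (by show u x - c * φ x = 0; rw [h1, h2, mul_zero, sub_zero])
  exact ⟨hu.1.sub (contDiff_const.mul hφ.1),
    myHCS (hu.2.1.union hφ.2.1) ((isClosed_tsupport u).union (isClosed_tsupport φ)) hsupp,
    (closure_minimal hsupp ((isClosed_tsupport u).union (isClosed_tsupport φ))).trans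
      (union_subset hu.2.2.1 hφ.2.2.1), hne⟩

end Sub
theorem eigenvalue_limit_is_twisted (n : ℕ) (H : EuclideanSpace ℝ (Fin n) → ℝ) (a b : ℝ)
    (ha : 0 < a) (hab : a ≤ b)
    (hconv : ConvexOn ℝ univ H)
    (hhom : ∀ (t : ℝ) (ξ : EuclideanSpace ℝ (Fin n)), H (t • ξ) = |t| * H ξ)
    (hlow : ∀ ξ : EuclideanSpace ℝ (Fin n), a * ‖ξ‖ ≤ H ξ)
    (hup : ∀ ξ : EuclideanSpace ℝ (Fin n), H ξ ≤ b * ‖ξ‖)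
    (Ω : Set (EuclideanSpace ℝ (Fin n))) (hΩo : IsOpen Ω) (hΩb : Bornology.IsBounded Ω)
    (hΩne : Ω.Nonempty)
    (L : ℝ)
    (hlim : Filter.Tendsto (fun α : ℝ => eigenInf n H α Ω) Filter.atTop (nhds L)) :
    L = twistedInf n H Ω := by
  classical
  have hH : Continuous H := myH_cont ha hab hconv hhom hup
  have hmono : Monotone (fun α => eigenInf n H α Ω) := eigen_mono hΩo hΩb hΩne
  have hub : ∀ α : ℝ, eigenInf n H α Ω ≤ L := fun α => hmono.ge_of_tendsto hlim α
  have hm : 0 < (volume Ω).toReal := meas_pos hΩo hΩb hΩne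
  rcases Nat.eq_zero_or_pos n with hn0 | hn
  · exfalso
    subst hn0
    haveI hsing : Subsingleton (EuclideanSpace ℝ (Fin 0)) :=
      ⟨fun x y => PiLp.ext fun i => i.elim0⟩
    set m := (volume Ω).toReal with hmdef
    set α₀ := (|L| + 1) / m with hα₀
    have key : ∀ u, testFun 0 Ω u → rayleighQ 0 H α₀ Ω u = α₀ * m := by
      intro u hu
      set k := u 0 with hk
      have hueq : u = fun _ => k := funext fun x => congrArg u (Subsingleton.elim x 0)
      have hk0 : k ≠ 0 := by
        intro h
        exact hu.2.2.2 (by rw [hueq, h]; rfl)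
      have hgrad : ∀ x, gradient u x = 0 := by
        intro x
        show (InnerProductSpace.toDual ℝ (EuclideanSpace ℝ (Fin 0))).symm (fderiv ℝ u x) = 0
        rw [hueq, fderiv_const_apply]
        simp
      have hzero : ∫ x in Ω, H (gradient u x) ^ 2 = 0 := by
        simp [hgrad, myH_zero hhom]
      rw [rayleighQ, hzero]
      simp only [hueq]
      rw [setIntegral_const, setIntegral_const]
      simp only [smul_eq_mul, Measure.real, ← hmdef]
      have hne2 : m * k ^ 2 ≠ 0 := mul_ne_zero hm.ne' (pow_ne_zero 2 hk0)
      rw [show (0 + α₀ * (m * k) ^ 2) = α₀ * m * (m * k ^ 2) by ring,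
        mul_div_assoc, div_self hne2, mul_one]
    have hge : α₀ * m ≤ eigenInf 0 H α₀ Ω := by
      apply le_csInf (eigen_set_nonempty hΩo hΩne α₀)
      rintro q ⟨u, hu, rfl⟩
      rw [key u hu]
    have h1 := hub α₀
    have h2 : α₀ * m = |L| + 1 := by
      rw [hα₀]
      field_simp
    have := le_abs_self L
    linarith
  -- n ≥ 1
  have hTne : {q : ℝ | ∃ u, testFun n Ω u ∧ (∫ x in Ω, u x) = 0 ∧
      q = (∫ x in Ω, (H (gradient u x)) ^ 2) / ∫ x in Ω, (u x) ^ 2}.Nonempty := by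
    obtain ⟨w, hw, hwm⟩ := exists_test_mean_zero hn hΩo hΩne
    exact ⟨_, ⟨w, hw, hwm, rfl⟩⟩
  have hTbdd : BddBelow {q : ℝ | ∃ u, testFun n Ω u ∧ (∫ x in Ω, u x) = 0 ∧
      q = (∫ x in Ω, (H (gradient u x)) ^ 2) / ∫ x in Ω, (u x) ^ 2} := by
    refine ⟨0, ?_⟩
    rintro q ⟨u, hu, hm0, rfl⟩
    exact div_nonneg (integral_nonneg fun x => sq_nonneg _)
      (integral_nonneg fun x => sq_nonneg _)
  have part1 : L ≤ twistedInf n H Ω := by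
    rw [twistedInf]
    apply le_csInf hTne
    rintro q ⟨u, hu, hm0, rfl⟩
    refine le_of_tendsto hlim (Filter.Eventually.of_forall fun α => ?_)
    have h := eigen_le (H := H) hΩo hΩb α hu
    rw [rayleighQ, hm0] at h
    simpa using h
  -- part 2
  obtain ⟨φ₀, hφ₀, hφ₀pos⟩ := exists_test_pos hΩo hΩne
  set c₀ := ∫ x in Ω, φ₀ x with hc₀
  have hφ : testFun n Ω (fun x => c₀⁻¹ * φ₀ x) := test_const_mul hφ₀ (inv_ne_zero hφ₀pos.ne')
  set φ := fun x => c₀⁻¹ * φ₀ x with hφdef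
  have hMφ : ∫ x in Ω, φ x = 1 := by
    rw [hφdef]
    rw [show (∫ x in Ω, c₀⁻¹ * φ₀ x) = c₀⁻¹ * ∫ x in Ω, φ₀ x from integral_const_mul _ _]
    rw [← hc₀, inv_mul_cancel₀ hφ₀pos.ne']
  set Nφ := ∫ x in Ω, H (gradient φ x) ^ 2 with hNφdef
  set Dφ := ∫ x in Ω, φ x ^ 2 with hDφdef
  have hNφ0 : 0 ≤ Nφ := integral_nonneg fun x => sq_nonneg _
  have hDφ0 : 0 < Dφ := test_denom_pos hΩo hφ
  have hL0 : 0 ≤ L := by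
    refine ge_of_tendsto hlim ?_
    filter_upwards [Filter.eventually_ge_atTop (0:ℝ)] with α hα
    apply le_csInf (eigen_set_nonempty hΩo hΩne α)
    rintro q ⟨u, hu, rfl⟩
    rw [rayleighQ]
    apply div_nonneg _ (integral_nonneg fun x => sq_nonneg _)
    have h1 : 0 ≤ ∫ x in Ω, H (gradient u x) ^ 2 := integral_nonneg fun x => sq_nonneg _
    exact add_nonneg h1 (mul_nonneg hα (sq_nonneg _))
  set s : ℝ → ℝ := fun α => Real.sqrt ((L+1)/α) with hsdef
  set g : ℝ → ℝ := fun α => (L + 1/α + 2 * s α * (Real.sqrt (L+1) * Real.sqrt Nφ)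
      + (s α)^2 * Nφ) / (1 - 2 * s α * Real.sqrt Dφ) with hgdef
  have hs0 : Filter.Tendsto s Filter.atTop (nhds 0) := by
    have h1 : Filter.Tendsto (fun α : ℝ => (L+1)/α) Filter.atTop (nhds 0) :=
      Filter.Tendsto.div_atTop tendsto_const_nhds Filter.tendsto_id
    have h2 := (Real.continuous_sqrt.tendsto 0).comp h1
    rw [Real.sqrt_zero] at h2
    exact h2
  have hginf : Filter.Tendsto g Filter.atTop (nhds L) := by
    have hinv : Filter.Tendsto (fun α : ℝ => 1/α) Filter.atTop (nhds 0) :=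
      Filter.Tendsto.div_atTop tendsto_const_nhds Filter.tendsto_id
    have hnum : Filter.Tendsto
        (fun α => L + 1/α + 2 * s α * (Real.sqrt (L+1) * Real.sqrt Nφ) + (s α)^2 * Nφ)
        Filter.atTop (nhds (L + 0 + 2 * 0 * (Real.sqrt (L+1) * Real.sqrt Nφ) + 0^2 * Nφ)) :=
      (((tendsto_const_nhds.add hinv).add ((hs0.const_mul 2).mul_const _)).add
        ((hs0.pow 2).mul_const _))
    have hden : Filter.Tendsto (fun α => 1 - 2 * s α * Real.sqrt Dφ)
        Filter.atTop (nhds (1 - 2 * 0 * Real.sqrt Dφ)) :=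
      tendsto_const_nhds.sub ((hs0.const_mul 2).mul_const _)
    have h3 := hnum.div hden (by norm_num)
    have h4 : (L + 0 + 2 * 0 * (Real.sqrt (L+1) * Real.sqrt Nφ) + 0^2 * Nφ)
        / (1 - 2 * 0 * Real.sqrt Dφ) = L := by norm_num
    rw [h4] at h3
    exact h3
  have hev : ∀ᶠ α in Filter.atTop, twistedInf n H Ω ≤ g α := by
    have hsmall : Filter.Tendsto (fun α => 2 * s α * Real.sqrt Dφ) Filter.atTop (nhds 0) := by
      have := (hs0.const_mul 2).mul_const (Real.sqrt Dφ)
      simpa using this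
    filter_upwards [Filter.eventually_ge_atTop (1:ℝ),
      hsmall.eventually_lt_const (show (0:ℝ) < 1/2 by norm_num)] with α hα1 hαs
    have hα0 : (0:ℝ) < α := lt_of_lt_of_le zero_lt_one hα1
    have hsα : 0 ≤ s α := Real.sqrt_nonneg _
    have hlt : eigenInf n H α Ω < L + 1/α := by
      have : 0 < 1/α := by positivity
      linarith [hub α]
    obtain ⟨q, hqmem, hqlt⟩ := exists_lt_of_csInf_lt (eigen_set_nonempty hΩo hΩne α) hlt
    obtain ⟨u, hu, rfl⟩ := hqmem
    rw [rayleighQ] at hqlt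
    set N := ∫ x in Ω, H (gradient u x) ^ 2 with hNdef
    set M := ∫ x in Ω, u x with hMdef
    set d := ∫ x in Ω, u x ^ 2 with hddef
    have hd0 : 0 < d := test_denom_pos hΩo hu
    have hN0 : 0 ≤ N := integral_nonneg fun x => sq_nonneg _
    have hnum : N + α * M^2 < (L + 1/α) * d := (div_lt_iff₀ hd0).mp hqlt
    have hNle : N ≤ (L + 1/α) * d := by
      linarith [mul_nonneg hα0.le (sq_nonneg M)]
    have hdle : (L + 1/α) * d ≤ (L + 1) * d := by
      have h1 : 1/α ≤ 1 := by rw [div_le_one hα0]; exact hα1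
      exact mul_le_mul_of_nonneg_right (by linarith) hd0.le
    have hM2 : M^2 ≤ ((L+1)/α) * d := by
      have h1 : α * M^2 ≤ (L + 1/α) * d := by linarith [hN0]
      rw [div_mul_eq_mul_div, le_div_iff₀ hα0]
      linarith [h1, hdle]
    have hMabs : |M| ≤ s α * Real.sqrt d := by
      rw [← Real.sqrt_sq_eq_abs, hsdef]
      show Real.sqrt (M^2) ≤ Real.sqrt ((L+1)/α) * Real.sqrt d
      rw [← Real.sqrt_mul (by positivity) d]
      exact Real.sqrt_le_sqrt hM2
    -- Cauchy-Schwarz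
    have hcs1 : (∫ x in Ω, u x * φ x)^2 ≤ d * Dφ :=
      my_cs _ u φ (test_int_sq hu) (test_int_sq hφ) (test_int_mul hu hφ)
    have habs1 : |∫ x in Ω, u x * φ x| ≤ Real.sqrt d * Real.sqrt Dφ := by
      rw [← Real.sqrt_mul hd0.le, ← Real.sqrt_sq_eq_abs]
      exact Real.sqrt_le_sqrt hcs1
    have hcs2 : (∫ x in Ω, H (gradient u x) * H (gradient φ x))^2 ≤ N * Nφ :=
      my_cs _ _ _ (test_int_gH_sq hH hhom hu) (test_int_gH_sq hH hhom hφ)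
        (test_int_gH_mul hH hhom hu hφ)
    have hIg0 : 0 ≤ ∫ x in Ω, H (gradient u x) * H (gradient φ x) :=
      integral_nonneg fun x => mul_nonneg (myH_nonneg ha hlow _) (myH_nonneg ha hlow _)
    have habs2 : ∫ x in Ω, H (gradient u x) * H (gradient φ x)
        ≤ Real.sqrt N * Real.sqrt Nφ := by
      refine le_trans (le_abs_self _) ?_
      rw [← Real.sqrt_mul hN0, ← Real.sqrt_sq_eq_abs]
      exact Real.sqrt_le_sqrt hcs2
    -- the corrected function v
    have hMv : ∫ x in Ω, (u x - M * φ x) = 0 := by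
      rw [expand_lin hu.1 hu.2.1 hφ.1 hφ.2.1 M, hMφ, mul_one, ← hMdef, sub_self]
    have hDv : ∫ x in Ω, (u x - M * φ x)^2
        = d - 2*M*(∫ x in Ω, u x * φ x) + M^2 * Dφ := by
      rw [expand_sq hu.1 hu.2.1 hφ.1 hφ.2.1 M, ← hddef, ← hDφdef]
    have hsqd : Real.sqrt d * Real.sqrt d = d := Real.mul_self_sqrt hd0.le
    have hDvlb : d * (1 - 2 * s α * Real.sqrt Dφ) ≤ ∫ x in Ω, (u x - M * φ x)^2 := by
      rw [hDv]
      have h3 : M * (∫ x in Ω, u x * φ x) ≤ (s α * Real.sqrt d) *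
          (Real.sqrt d * Real.sqrt Dφ) := by
        calc M * (∫ x in Ω, u x * φ x) ≤ |M * (∫ x in Ω, u x * φ x)| := le_abs_self _
          _ = |M| * |∫ x in Ω, u x * φ x| := abs_mul _ _
          _ ≤ (s α * Real.sqrt d) * (Real.sqrt d * Real.sqrt Dφ) :=
            mul_le_mul hMabs habs1 (abs_nonneg _) (mul_nonneg hsα (Real.sqrt_nonneg _))
      have h4 : (s α * Real.sqrt d) * (Real.sqrt d * Real.sqrt Dφ)
          = s α * Real.sqrt Dφ * d := by
        rw [show (s α * Real.sqrt d) * (Real.sqrt d * Real.sqrt Dφ)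
          = s α * Real.sqrt Dφ * (Real.sqrt d * Real.sqrt d) by ring, hsqd]
      linarith [h3, h4, mul_nonneg (sq_nonneg M) hDφ0.le]
    have hB : 0 < 1 - 2 * s α * Real.sqrt Dφ := by linarith
    have hDvpos : 0 < ∫ x in Ω, (u x - M * φ x)^2 :=
      lt_of_lt_of_le (by positivity) hDvlb
    have hvne : (fun x => u x - M * φ x) ≠ 0 := by
      intro h0
      have hz : ∀ x, u x - M * φ x = 0 := fun x => congrFun h0 x
      have hzz : (∫ x in Ω, (u x - M * φ x)^2) = 0 := by simp [hz]
      rw [hzz] at hDvpos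
      exact lt_irrefl 0 hDvpos
    have htestv : testFun n Ω (fun x => u x - M * φ x) := test_sub hu hφ M hvne
    have h6 : twistedInf n H Ω ≤ (∫ x in Ω, H (gradient (fun x => u x - M * φ x) x)^2)
        / ∫ x in Ω, (u x - M * φ x)^2 := by
      rw [twistedInf]
      exact csInf_le hTbdd ⟨_, htestv, hMv, rfl⟩
    have hNvle := Nv_le (Ω := Ω) hH hconv hhom ha hlow hu.1 hu.2.1 hφ.1 hφ.2.1 M
    rw [← hNdef, ← hNφdef] at hNvle
    have e_s : (s α)^2 = (L+1)/α := Real.sq_sqrt (by positivity)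
    have hsqN : Real.sqrt N ≤ Real.sqrt (L+1) * Real.sqrt d := by
      rw [← Real.sqrt_mul (by positivity) d]
      exact Real.sqrt_le_sqrt (le_trans hNle hdle)
    have h9 : 2 * |M| * (∫ x in Ω, H (gradient u x) * H (gradient φ x))
        ≤ 2 * ((s α * Real.sqrt d) * ((Real.sqrt (L+1) * Real.sqrt d) * Real.sqrt Nφ)) := by
      have h14 := mul_le_mul hMabs (le_trans habs2 (mul_le_mul_of_nonneg_right hsqN
        (Real.sqrt_nonneg _))) hIg0 (mul_nonneg hsα (Real.sqrt_nonneg _))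
      linarith [h14]
    have hAle : ∫ x in Ω, H (gradient (fun x => u x - M * φ x) x)^2
        ≤ d * (L + 1/α + 2 * s α * (Real.sqrt (L+1) * Real.sqrt Nφ) + (s α)^2 * Nφ) := by
      have hM2' : M^2 * Nφ ≤ (s α)^2 * d * Nφ := by
        rw [e_s]
        exact mul_le_mul_of_nonneg_right hM2 hNφ0
      have e9 : (s α * Real.sqrt d) * ((Real.sqrt (L+1) * Real.sqrt d) * Real.sqrt Nφ)
          = s α * (Real.sqrt (L+1) * Real.sqrt Nφ) * d := by
        rw [show (s α * Real.sqrt d) * ((Real.sqrt (L+1) * Real.sqrt d) * Real.sqrt Nφ)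
          = s α * (Real.sqrt (L+1) * Real.sqrt Nφ) * (Real.sqrt d * Real.sqrt d) by ring, hsqd]
      linarith [hNvle, hNle, h9, e9, hM2']
    have hA0 : 0 ≤ L + 1/α + 2 * s α * (Real.sqrt (L+1) * Real.sqrt Nφ) + (s α)^2 * Nφ := by
      have h10 : 0 ≤ 2 * s α * (Real.sqrt (L+1) * Real.sqrt Nφ) := by positivity
      have h11 : 0 ≤ (s α)^2 * Nφ := mul_nonneg (sq_nonneg _) hNφ0
      have h12 : 0 < 1/α := by positivity
      linarith
    have hfinal : (∫ x in Ω, H (gradient (fun x => u x - M * φ x) x)^2)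
        / (∫ x in Ω, (u x - M * φ x)^2) ≤ g α := by
      have hdB : 0 < d * (1 - 2 * s α * Real.sqrt Dφ) := mul_pos hd0 hB
      have h13 : (∫ x in Ω, H (gradient (fun x => u x - M * φ x) x)^2)
          / (∫ x in Ω, (u x - M * φ x)^2)
          ≤ (d * (L + 1/α + 2 * s α * (Real.sqrt (L+1) * Real.sqrt Nφ) + (s α)^2 * Nφ))
            / (d * (1 - 2 * s α * Real.sqrt Dφ)) :=
        div_le_div₀ (mul_nonneg hd0.le hA0) hAle hdB hDvlb
      rw [mul_div_mul_left _ _ hd0.ne'] at h13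
      simpa only [hgdef] using h13
    exact le_trans h6 hfinal
  have part2 : twistedInf n H Ω ≤ L := ge_of_tendsto hginf hev
  linarith
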